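/- Let f : [0,1]^Λ → [0,1]^Λ be the generating function associated to offspring laws (p_x)_{x∈Λ}, and let m(x,y) := Σ_{z∈N} p_x(z) z(y) ∈ [0,∞] be the mean matrix, with powers m^{(n)} defined by m^{(1)} = m and m^{(n+1)}(x,y) = Σ_{w∈Λ} m^{(n)}(x,w) m(w,y) (computed in [0,∞]). Assume m is irreducible: for all x, y ∈ Λ there exists n ≥ 1 with m^{(n)}(x,y) > 0. If s ∈ [0,1]^Λ satisfies f(s) = s and s_x < 1 for some x ∈ Λ, then s_y < 1 for every y ∈ Λ. -/
import Mathlib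


open Filter Topology

/-- The generating function associated to offspring laws `p`:
`f_x(s) = Σ_{z} p_x(z) ∏_{y ∈ supp z} s_y^{z(y)}`, where `z` ranges over finitely
supported functions `Λ →₀ ℕ`. -/
noncomputable def genFun {Λ : Type*} (p : Λ → (Λ →₀ ℕ) → ℝ) (s : Λ → ℝ) : Λ → ℝ :=
  fun x => ∑' z : Λ →₀ ℕ, p x z * ∏ y ∈ z.support, s y ^ z y

/-- The mean matrix `m(x,y) = Σ_z p_x(z) z(y)`, computed in `[0,∞]`. -/
noncomputable def meanMat {Λ : Type*} (p : Λ → (Λ →₀ ℕ) → ℝ) (x y : Λ) : ENNReal :=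
  ∑' z : Λ →₀ ℕ, ENNReal.ofReal (p x z) * (z y : ENNReal)

/-- Powers of the mean matrix, computed in `[0,∞]`. -/
noncomputable def meanPow {Λ : Type*} [DecidableEq Λ] (p : Λ → (Λ →₀ ℕ) → ℝ) :
    ℕ → Λ → Λ → ENNReal
  | 0 => fun x y => if x = y then 1 else 0
  | n + 1 => fun x y => ∑' w : Λ, meanPow p n x w * meanMat p w y

lemma oneStep {Λ : Type*} [DecidableEq Λ]
    (p : Λ → (Λ →₀ ℕ) → ℝ)
    (hp0 : ∀ x z, 0 ≤ p x z)
    (hp1 : ∀ x, HasSum (p x) 1)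
    (s : Λ → ℝ) (hs : ∀ y, s y ∈ Set.Icc (0 : ℝ) 1)
    (hfix : genFun p s = s)
    {w y : Λ} (hm : 0 < meanMat p w y) (hy : s y < 1) : s w < 1 := by
  obtain ⟨z0, hz0⟩ : ∃ z0 : Λ →₀ ℕ,
      ENNReal.ofReal (p w z0) * (z0 y : ENNReal) ≠ 0 := by
    by_contra h'
    push_neg at h'
    rw [meanMat, ENNReal.tsum_eq_zero.mpr h'] at hm
    exact lt_irrefl _ hm
  have hpz0 : 0 < p w z0 := by
    rcases (hp0 w z0).lt_or_eq with h | h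
    · exact h
    · exact absurd (by simp [← h]) hz0
  have hzy : z0 y ≠ 0 := by
    intro h
    exact hz0 (by simp [h])
  set g : (Λ →₀ ℕ) → ℝ := fun z => p w z * ∏ t ∈ z.support, s t ^ z t with hg
  have hprod01 : ∀ z : Λ →₀ ℕ, (∏ t ∈ z.support, s t ^ z t) ∈ Set.Icc (0:ℝ) 1 := by
    intro z
    constructor
    · exact Finset.prod_nonneg fun t _ => pow_nonneg (hs t).1 _
    · exact Finset.prod_le_one (fun t _ => pow_nonneg (hs t).1 _)
        (fun t _ => pow_le_one₀ (hs t).1 (hs t).2)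
  have hgle : ∀ z, g z ≤ p w z := fun z => by
    simpa using mul_le_mul_of_nonneg_left (hprod01 z).2 (hp0 w z)
  have hgnn : ∀ z, 0 ≤ g z := fun z =>
    mul_nonneg (hp0 w z) (hprod01 z).1
  have hsumg : Summable g := Summable.of_nonneg_of_le hgnn hgle (hp1 w).summable
  have hmem : y ∈ z0.support := Finsupp.mem_support_iff.mpr hzy
  have hprodlt : (∏ t ∈ z0.support, s t ^ z0 t) < 1 := by
    calc (∏ t ∈ z0.support, s t ^ z0 t)
        = s y ^ z0 y * ∏ t ∈ z0.support.erase y, s t ^ z0 t :=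
          (Finset.mul_prod_erase _ _ hmem).symm
      _ ≤ s y ^ z0 y * 1 := by
          apply mul_le_mul_of_nonneg_left _ (pow_nonneg (hs y).1 _)
          exact Finset.prod_le_one (fun t _ => pow_nonneg (hs t).1 _)
            (fun t _ => pow_le_one₀ (hs t).1 (hs t).2)
      _ = s y ^ z0 y := mul_one _
      _ ≤ s y := pow_le_of_le_one (hs y).1 (hs y).2 hzy
      _ < 1 := hy
  have hstrict : g z0 < p w z0 := by
    have := mul_lt_mul_of_pos_left hprodlt hpz0
    simpa [hg] using this
  have hlt' : ∑' z, g z < ∑' z, p w z :=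
    Summable.tsum_lt_tsum hgle hstrict hsumg (hp1 w).summable
  have : genFun p s w < 1 := by
    rw [genFun]
    calc (∑' z : Λ →₀ ℕ, p w z * ∏ t ∈ z.support, s t ^ z t) < ∑' z, p w z := hlt'
      _ = 1 := (hp1 w).tsum_eq
  rwa [hfix] at this

/-- if the mean matrix is irreducible and `s ∈ [0,1]^Λ` is a fixed point
of the generating function with `s_x < 1` for some `x`, then `s_y < 1` for every `y`. -/
theorem fixed_point_strictly_below_one
    {Λ : Type*} [Countable Λ] [DecidableEq Λ]
    (p : Λ → (Λ →₀ ℕ) → ℝ)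
    (hp0 : ∀ x z, 0 ≤ p x z)
    (hp1 : ∀ x, HasSum (p x) 1)
    -- irreducibility of the mean matrix
    (hirr : ∀ x y : Λ, ∃ n, 1 ≤ n ∧ 0 < meanPow p n x y)
    (s : Λ → ℝ) (hs : ∀ y, s y ∈ Set.Icc (0 : ℝ) 1)
    (hfix : genFun p s = s)
    (hlt : ∃ x, s x < 1) :
    ∀ y, s y < 1 := by
  obtain ⟨x, hx⟩ := hlt
  have key : ∀ n : ℕ, ∀ y t : Λ, s t < 1 → 0 < meanPow p n y t → s y < 1 := by
    intro n
    induction n with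
    | zero =>
      intro y t ht hpos
      simp only [meanPow] at hpos
      by_cases h : y = t
      · rwa [h]
      · simp [h] at hpos
    | succ n ih =>
      intro y t ht hpos
      simp only [meanPow] at hpos
      obtain ⟨w, hw⟩ : ∃ w : Λ, meanPow p n y w * meanMat p w t ≠ 0 := by
        by_contra h'
        push_neg at h'
        rw [ENNReal.tsum_eq_zero.mpr h'] at hpos
        exact lt_irrefl _ hpos
      have h1 : 0 < meanPow p n y w := pos_iff_ne_zero.mpr fun h => hw (by simp [h])
      have h2 : 0 < meanMat p w t := pos_iff_ne_zero.mpr fun h => hw (by simp [h])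
      exact ih y w (oneStep p hp0 hp1 s hs hfix h2 ht) h1
  intro y
  obtain ⟨n, _, hn⟩ := hirr y x
  exact key n y x hx hn
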